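/- Let p be an odd prime and m a positive integer not divisible by p. Let T be a finite abelian group whose cardinality is a power of p, let λ : T × T → ℚ/ℤ be a non-degenerate linking form on T, and let φ be an automorphism of T with φ^m = id and λ(φx, φy) = λ(x, y) for all x, y ∈ T. Then there exist finitely many subgroups T₁, T₂, …, T_N of T such that: T is the internal direct sum of T₁, …, T_N; each Tᵢ is invariant under φ; the Tᵢ are pairwise orthogonal with respect to λ (λ(x, y) = 0 whenever x ∈ Tᵢ, y ∈ Tⱼ, i ≠ j); and each Tᵢ is isomorphic, as an abelian group, to (ℤ/pⁱℤ)^{nᵢ} for some integer nᵢ ≥ 0. -/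

import Mathlib

noncomputable def zeta (Q : ℕ) : ZMod Q →+ AddCircle (1 : ℚ) :=
  ZMod.lift Q ⟨(zmultiplesHom _) (((Q : ℚ)⁻¹ : ℚ) : AddCircle (1 : ℚ)), by
    by_cases hQ : Q = 0
    · subst hQ; simp
    have : ((Q : ℤ) • ((Q : ℚ)⁻¹ : ℚ) : AddCircle (1 : ℚ)) = (((Q:ℚ) * (Q:ℚ)⁻¹ : ℚ) : AddCircle (1:ℚ)) := by
      rw [← AddCircle.coe_zsmul]; congr 1
      try push_cast
      try ring
    simp only [zmultiplesHom_apply, this, mul_inv_cancel₀ (by exact_mod_cast hQ : (Q:ℚ) ≠ 0)]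
    exact AddCircle.coe_period 1⟩

lemma zeta_intCast (Q : ℕ) (z : ℤ) :
    zeta Q ((z : ZMod Q)) = (((z : ℚ) * ((Q : ℚ)⁻¹ : ℚ) : ℚ) : AddCircle (1 : ℚ)) := by
  unfold zeta
  rw [ZMod.lift_coe]
  simp only [zmultiplesHom_apply, ← AddCircle.coe_zsmul]
  congr 1
  try push_cast
  try ring

lemma zeta_injective (Q : ℕ) (hQ : Q ≠ 0) : Function.Injective (zeta Q) := by
  haveI : NeZero Q := ⟨hQ⟩
  rw [injective_iff_map_eq_zero]
  intro a ha
  have h1 : a = ((a.val : ℤ) : ZMod Q) := by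
    rw [Int.cast_natCast, ZMod.natCast_zmod_val]
  rw [h1, zeta_intCast] at ha
  rw [AddCircle.coe_eq_zero_iff] at ha
  obtain ⟨n, hn⟩ := ha
  rw [zsmul_eq_mul, mul_one] at hn
  have hQQ : (Q:ℚ) ≠ 0 := by exact_mod_cast hQ
  push_cast at hn
  have : (a.val : ℚ) = n * Q := by
    rw [hn]; field_simp
  have h2 : (a.val : ℤ) = n * Q := by exact_mod_cast this
  rw [h1, h2]
  push_cast
  simp

lemma zeta_surj_torsion (Q : ℕ) (hQ : Q ≠ 0) (a : AddCircle (1:ℚ)) (ha : Q • a = 0) :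
    ∃ k : ZMod Q, zeta Q k = a := by
  obtain ⟨r, rfl⟩ := QuotientAddGroup.mk_surjective a
  have : ((Q • r : ℚ) : AddCircle (1:ℚ)) = 0 := by rw [AddCircle.coe_nsmul]; exact ha
  rw [AddCircle.coe_eq_zero_iff] at this
  obtain ⟨n, hn⟩ := this
  refine ⟨((n : ℤ) : ZMod Q), ?_⟩
  rw [zeta_intCast]
  congr 1
  have hQQ : (Q:ℚ) ≠ 0 := by exact_mod_cast hQ
  rw [zsmul_eq_mul, mul_one] at hn
  rw [nsmul_eq_mul] at hn
  field_simp
  linarith [hn]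

lemma struct_pi (Q : ℕ) (T : Type) [AddCommGroup T] [Finite T] (hexp : ∀ x : T, Q • x = 0) :
    ∃ (ι : Type) (_ : Fintype ι) (f : ι → ℕ), (∀ i, 1 < f i) ∧ (∀ i, f i ∣ Q) ∧
      Nonempty (T ≃+ ∀ i, ZMod (f i)) := by
  classical
  obtain ⟨ι, hι, f, h1, ⟨σ⟩⟩ := AddCommGroup.equiv_directSum_zmod_of_finite' T
  haveI := hι
  let τ : T ≃+ ∀ i, ZMod (f i) :=
    σ.trans (DirectSum.linearEquivFunOnFintype ℤ ι (fun i => ZMod (f i))).toAddEquiv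
  refine ⟨ι, hι, f, h1, fun i => ?_, ⟨τ⟩⟩
  haveI : NeZero (f i) := ⟨by have := h1 i; omega⟩
  have hx := hexp (τ.symm (Pi.single i (1 : ZMod (f i))))
  have : Q • Pi.single i (1 : ZMod (f i)) = (0 : ∀ i, ZMod (f i)) := by
    have := congrArg τ hx
    rwa [map_nsmul, AddEquiv.apply_symm_apply, map_zero] at this
  have h2 := congrFun this i
  rw [Pi.smul_apply, Pi.single_eq_same] at h2
  rw [nsmul_eq_mul, mul_one] at h2
  exact (ZMod.natCast_eq_zero_iff Q (f i)).mp h2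

lemma pi_all_eq (ι : Type) [Fintype ι] (f : ι → ℕ) (Q : ℕ) (h : ∀ i, f i = Q) :
    ∃ n : ℕ, Nonempty ((∀ i, ZMod (f i)) ≃+ (Fin n → ZMod Q)) := by
  have hf : f = fun _ => Q := funext h
  subst hf
  refine ⟨Fintype.card ι, ⟨?_⟩⟩
  exact
    { toFun := fun g => g ∘ (Fintype.equivFin ι).symm
      invFun := fun g => g ∘ (Fintype.equivFin ι)
      left_inv := fun g => by funext i; exact congrArg g (Equiv.symm_apply_apply _ i)
      right_inv := fun g => by funext i; exact congrArg g (Equiv.apply_symm_apply _ i)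
      map_add' := fun a b => rfl }

lemma homocyclic_iso (p E : ℕ) (hp : p.Prime) (T : Type) [AddCommGroup T] [Finite T]
    (hexp : ∀ x : T, p ^ E • x = 0)
    (hdiv : ∀ j : ℕ, 1 ≤ j → j < E → ∀ x : T, p ^ j • x = 0 → ∃ y : T, x = p • y) :
    ∃ n : ℕ, Nonempty (T ≃+ (Fin n → ZMod (p ^ E))) := by
  classical
  obtain ⟨ι, hι, f, h1, hdvd, ⟨τ⟩⟩ := struct_pi (p ^ E) T hexp
  haveI := hι
  have hfeq : ∀ i, f i = p ^ E := by
    intro i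
    obtain ⟨a, haE, hfa⟩ := (Nat.dvd_prime_pow hp).mp (hdvd i)
    have ha1 : 1 ≤ a := by
      rcases Nat.eq_zero_or_pos a with h | h
      · exfalso; rw [h, pow_zero] at hfa; have := h1 i; omega
      · exact h
    rcases lt_or_eq_of_le haE with haE | haE
    · exfalso
      haveI : NeZero (f i) := ⟨by have := h1 i; omega⟩
      set x := τ.symm (Pi.single i (1 : ZMod (f i))) with hxdef
      have hxa : p ^ a • x = 0 := by
        apply τ.injective
        rw [map_nsmul, AddEquiv.apply_symm_apply, map_zero]
        funext k
        rw [Pi.smul_apply]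
        by_cases hk : k = i
        · subst hk
          rw [Pi.single_eq_same, nsmul_eq_mul, mul_one]
          exact (ZMod.natCast_eq_zero_iff _ _).mpr (by rw [hfa])
        · rw [Pi.single_eq_of_ne hk, smul_zero]; rfl
      obtain ⟨y, hy⟩ := hdiv a ha1 haE x hxa
      have := congrFun (congrArg τ hy) i
      rw [hxdef, AddEquiv.apply_symm_apply, map_nsmul, Pi.smul_apply, Pi.single_eq_same] at this
      have hcast := congrArg (ZMod.castHom (show p ∣ f i by rw [hfa]; exact dvd_pow_self p (by omega)) (ZMod p)) this
      rw [map_one, map_nsmul] at hcast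
      rw [nsmul_eq_mul] at hcast
      have h10 : (1 : ZMod p) = 0 := by
        rw [hcast, ZMod.natCast_self, zero_mul]
      haveI : Fact p.Prime := ⟨hp⟩
      exact one_ne_zero h10
    · rw [hfa, haE]
  obtain ⟨n, ⟨ρ⟩⟩ := pi_all_eq ι f (p ^ E) hfeq
  exact ⟨n, ⟨τ.trans ρ⟩⟩

lemma zmod_pdiv (p E : ℕ) (hp : p.Prime) (hE : 1 ≤ E) (z : ZMod (p ^ E))
    (hz : p ^ (E - 1) • z = 0) : ∃ w : ZMod (p ^ E), z = p • w := by
  haveI : NeZero (p ^ E) := ⟨pow_ne_zero _ hp.pos.ne'⟩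
  have hz' : ((p ^ (E - 1) * z.val : ℕ) : ZMod (p ^ E)) = 0 := by
    push_cast
    rw [ZMod.natCast_zmod_val]
    rw [nsmul_eq_mul] at hz
    exact_mod_cast hz
  have hdvd : p ^ E ∣ p ^ (E - 1) * z.val := (ZMod.natCast_eq_zero_iff _ _).mp hz'
  have hEE : p ^ E = p ^ (E - 1) * p := by
    rw [← pow_succ]; congr 1; omega
  have hdvd2 : p ^ (E - 1) * p ∣ p ^ (E - 1) * z.val := by rw [← hEE]; exact hdvd
  have hpz : p ∣ z.val :=
    (mul_dvd_mul_iff_left (a := p ^ (E - 1)) (pow_ne_zero _ hp.pos.ne')).mp hdvd2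
  refine ⟨((z.val / p : ℕ) : ZMod (p ^ E)), ?_⟩
  rw [nsmul_eq_mul]
  calc z = ((z.val : ℕ) : ZMod (p ^ E)) := by rw [ZMod.natCast_zmod_val]
    _ = ((p * (z.val / p) : ℕ) : ZMod (p ^ E)) := by rw [Nat.mul_div_cancel' hpz]
    _ = _ := by push_cast; ring

lemma zmod_pdiv' (p E n : ℕ) (hp : p.Prime) (hE : 1 ≤ E) (hn : n = p ^ E) (z : ZMod n)
    (hz : p ^ (E - 1) • z = 0) : ∃ w : ZMod n, z = p • w := by
  subst hn; exact zmod_pdiv p E hp hE z hz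

lemma proj_exists (p E : ℕ) (hp : p.Prime) (hE : 1 ≤ E) (T : Type) [AddCommGroup T] [Finite T]
    (hexp : ∀ x : T, p ^ E • x = 0) :
    ∃ π₀ : T →+ T, (∀ x, p ^ (E - 1) • (π₀ x - x) = 0) ∧
      (∀ x : T, p ^ (E - 1) • x = 0 → ∃ y, π₀ x = p • y) := by
  classical
  obtain ⟨ι, hι, f, h1, hdvd, ⟨τ⟩⟩ := struct_pi (p ^ E) T hexp
  haveI := hι
  let projS : (∀ i, ZMod (f i)) →+ (∀ i, ZMod (f i)) :=
    AddMonoidHom.mk' (fun g i => if f i = p ^ E then g i else 0)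
      (by intro a b; funext i; by_cases h : f i = p ^ E <;> simp [h])
  refine ⟨(τ.symm.toAddMonoidHom.comp projS).comp τ.toAddMonoidHom, ?_, ?_⟩
  · intro x
    apply τ.injective
    rw [map_nsmul, map_zero, map_sub]
    simp only [AddMonoidHom.comp_apply, AddEquiv.toAddMonoidHom_eq_coe,
      AddMonoidHom.coe_coe, AddEquiv.apply_symm_apply]
    funext i
    rw [Pi.smul_apply, Pi.sub_apply]
    show p ^ (E - 1) • ((if f i = p ^ E then τ x i else 0) - τ x i) = 0
    by_cases h : f i = p ^ E
    · simp [h]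
    · rw [if_neg h]
      have hfi : f i ∣ p ^ (E - 1) := by
        obtain ⟨a, haE, hfa⟩ := (Nat.dvd_prime_pow hp).mp (hdvd i)
        have : a ≠ E := fun hc => h (by rw [hfa, hc])
        rw [hfa]
        exact pow_dvd_pow p (by omega)
      rw [zero_sub, smul_neg, neg_eq_zero, nsmul_eq_mul]
      have : ((p ^ (E - 1) : ℕ) : ZMod (f i)) = 0 :=
        (ZMod.natCast_eq_zero_iff _ _).mpr hfi
      rw [this, zero_mul]
  · intro x hx
    have hco : ∀ i, ∃ w : ZMod (f i), (if f i = p ^ E then τ x i else 0) = p • w := by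
      intro i
      by_cases h : f i = p ^ E
      · rw [if_pos h]
        have : p ^ (E - 1) • τ x i = 0 := by
          have := congrFun (by rw [← map_nsmul, hx, map_zero] :
            (p ^ (E - 1) • τ x : ∀ i, ZMod (f i)) = 0) i
          rwa [Pi.smul_apply] at this
        exact zmod_pdiv' p E (f i) hp hE h (τ x i) this
      · exact ⟨0, by rw [if_neg h, smul_zero]⟩
    choose w hw using hco
    refine ⟨τ.symm w, ?_⟩
    simp only [AddMonoidHom.comp_apply, AddEquiv.toAddMonoidHom_eq_coe, AddMonoidHom.coe_coe]
    rw [← map_nsmul]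
    congr 1
    funext i
    rw [Pi.smul_apply]
    exact hw i

lemma smul_inv_nat (m Q : ℕ) (hQ : 1 < Q) (hco : Nat.Coprime m Q) :
    ∃ k : ℕ, ∀ (T : Type) (_ : AddCommGroup T) (x : T), Q • x = 0 → (k * m) • x = x := by
  obtain ⟨k, -, hk⟩ := Nat.exists_mul_mod_eq_one_of_coprime hco hQ
  refine ⟨k, ?_⟩
  intro T _ x hx
  have h1 : m * k = Q * (m * k / Q) + 1 := by
    conv_lhs => rw [← Nat.div_add_mod (m * k) Q, hk]
  have h2 : (k * m) • x = (Q * (m * k / Q)) • x + (1:ℕ) • x := by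
    rw [← add_nsmul, ← h1, mul_comm k m]
  rw [h2, mul_nsmul, hx, smul_zero, zero_add, one_nsmul]


section Avg

variable {T : Type} [AddCommGroup T] [Finite T]

/-- conjugate of π₀ by φ^k -/
private def conv (φ : AddAut T) (π₀ : T →+ T) (k : ℕ) : T →+ T :=
  (((k • φ : AddAut T) : T ≃+ T).toAddMonoidHom.comp π₀).comp
    (((k • -φ : AddAut T) : T ≃+ T).toAddMonoidHom)

lemma conv_apply (φ : AddAut T) (π₀ : T →+ T) (k : ℕ) (x : T) :
    conv φ π₀ k x = (k • φ) (π₀ ((k • -φ) x)) := rfl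

lemma conv_succ (φ : AddAut T) (π₀ : T →+ T) (k : ℕ) (x : T) :
    conv φ π₀ (k + 1) (φ x) = φ (conv φ π₀ k x) := by
  rw [conv_apply, conv_apply, succ_nsmul (-φ), succ_nsmul' φ]
  have h1 : ((k • -φ + -φ : AddAut T)) (φ x) = (k • -φ) x := by
    show (k • -φ) ((-φ) (φ x)) = (k • -φ) x
    congr 1
    exact AddAut.neg_apply_self T φ x
  rw [h1]
  rfl

lemma conv_m (φ : AddAut T) (π₀ : T →+ T) (m : ℕ) (hφm : m • φ = 0) :
    conv φ π₀ m = conv φ π₀ 0 := by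
  unfold conv
  rw [hφm, neg_nsmul, hφm, zero_nsmul, neg_nsmul, zero_nsmul, neg_zero]

end Avg

lemma avg_U (p m E : ℕ) (hp : p.Prime) (hm : 0 < m) (hpm : ¬ p ∣ m) (hE : 1 ≤ E)
    (T : Type) [AddCommGroup T] [Finite T]
    (φ : AddAut T) (hφm : m • φ = 0)
    (hexp : ∀ x : T, p ^ E • x = 0) :
    ∃ U : Submodule ℤ T,
      (∀ x ∈ U, φ x ∈ U) ∧ (∀ x ∈ U, (-φ : AddAut T) x ∈ U) ∧
      (∀ t : T, ∃ u ∈ U, p ^ (E - 1) • u = p ^ (E - 1) • t) ∧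
      (∀ j : ℕ, 1 ≤ j → j ≤ E - 1 → ∀ u ∈ U, p ^ j • u = 0 → ∃ w ∈ U, u = p • w) := by
  classical
  obtain ⟨π₀, hπ1, hπ2⟩ := proj_exists p E hp hE T hexp
  set Q := p ^ E with hQdef
  have hQ : 1 < Q := Nat.one_lt_pow (by omega) hp.one_lt
  have hco : Nat.Coprime m Q := ((hp.coprime_iff_not_dvd.mpr hpm).symm).pow_right E
  obtain ⟨k₀, hk₀⟩ := smul_inv_nat m Q hQ hco
  set ψ₀ : T →+ T := ∑ k ∈ Finset.range m, conv φ π₀ k with hψ₀def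
  set ψ : T →+ T := k₀ • ψ₀ with hψdef
  -- equivariance
  have hcomm : ∀ x, ψ (φ x) = φ (ψ x) := by
    intro x
    have h0 : ψ₀ (φ x) = φ (ψ₀ x) := by
      have hL : ψ₀ (φ x) = ∑ k ∈ Finset.range m, conv φ π₀ k (φ x) := by
        rw [hψ₀def]; exact AddMonoidHom.finset_sum_apply _ _ _
      have hR : φ (ψ₀ x) = ∑ k ∈ Finset.range m, conv φ π₀ (k + 1) (φ x) := by
        rw [hψ₀def, AddMonoidHom.finset_sum_apply, map_sum]
        exact Finset.sum_congr rfl fun k _ => (conv_succ φ π₀ k x).symm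
      have key : ∑ k ∈ Finset.range m, conv φ π₀ (k + 1) (φ x)
          = ∑ k ∈ Finset.range m, conv φ π₀ k (φ x) := by
        have h1 := Finset.sum_range_succ' (fun k => conv φ π₀ k (φ x)) m
        have h2 := Finset.sum_range_succ (fun k => conv φ π₀ k (φ x)) m
        have h3 : conv φ π₀ m (φ x) = conv φ π₀ 0 (φ x) := by rw [conv_m φ π₀ m hφm]
        have := h1.symm.trans h2
        rw [h3] at this
        exact add_right_cancel this
      rw [hL, hR, key]
    rw [hψdef]
    simp only [AddMonoidHom.nsmul_apply]
    rw [h0, map_nsmul]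
  have hcomm' : ∀ x, ψ ((-φ : AddAut T) x) = (-φ : AddAut T) (ψ x) := by
    intro x
    have := hcomm ((-φ : AddAut T) x)
    rw [AddAut.apply_neg_self] at this
    rw [this]
    simp
  -- conv preserves p^(E-1) multiplication
  have hconv1 : ∀ k x, p ^ (E - 1) • conv φ π₀ k x = p ^ (E - 1) • x := by
    intro k x
    rw [conv_apply, ← map_nsmul]
    have : p ^ (E - 1) • π₀ ((k • -φ) x) = p ^ (E - 1) • ((k • -φ) x) := by
      have h := hπ1 ((k • -φ) x)
      rw [smul_sub, sub_eq_zero] at h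
      exact h
    rw [this, ← map_nsmul]
    have : (k • φ) ((k • -φ) (p ^ (E - 1) • x)) = p ^ (E - 1) • x := by
      rw [neg_nsmul]
      exact AddAut.apply_neg_self T (k • φ) _
    rw [map_nsmul, map_nsmul] at this ⊢
    exact this
  have hψ1 : ∀ x, p ^ (E - 1) • ψ x = p ^ (E - 1) • x := by
    intro x
    have h0 : p ^ (E - 1) • ψ₀ x = m • (p ^ (E - 1) • x) := by
      rw [hψ₀def, AddMonoidHom.finset_sum_apply, Finset.smul_sum]
      rw [Finset.sum_congr rfl fun k _ => hconv1 k x]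
      rw [Finset.sum_const, Finset.card_range]
    rw [hψdef]
    simp only [AddMonoidHom.nsmul_apply]
    rw [smul_comm, h0, smul_smul]
    exact hk₀ T _ _ (by rw [smul_comm]; rw [hexp]; exact smul_zero _)
  have hψ2 : ∀ x, p ^ (E - 1) • x = 0 → ∃ y, ψ x = p • y := by
    intro x hx
    have hz : ∀ k : ℕ, ∃ z, conv φ π₀ k x = p • z := by
      intro k
      have hy : p ^ (E - 1) • ((k • -φ) x) = 0 := by
        rw [← map_nsmul, hx, map_zero]
      obtain ⟨z, hz⟩ := hπ2 _ hy
      exact ⟨(k • φ) z, by rw [conv_apply, hz, map_nsmul]⟩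
    choose z hzz using hz
    refine ⟨k₀ • ∑ k ∈ Finset.range m, z k, ?_⟩
    rw [hψdef]
    simp only [AddMonoidHom.nsmul_apply]
    rw [hψ₀def, AddMonoidHom.finset_sum_apply]
    rw [Finset.sum_congr rfl fun k _ => hzz k]
    rw [← Finset.smul_sum, smul_comm]
  -- stable range
  set g : T →ₗ[ℤ] T := ψ.toIntLinearMap with hgdef
  have hgapp : ∀ x, g x = ψ x := fun _ => rfl
  set R : ℕ → Submodule ℤ T := fun n => LinearMap.range ((g ^ n : Module.End ℤ T) : T →ₗ[ℤ] T)
    with hRdef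
  have hRsucc : ∀ n, R (n + 1) = Submodule.map g (R n) := by
    intro n
    rw [hRdef]
    simp only
    rw [pow_succ' g n, Module.End.mul_eq_comp, LinearMap.range_comp]
  have hRmono : ∀ n, R (n + 1) ≤ R n := by
    intro n x hx
    obtain ⟨t, rfl⟩ := hx
    refine ⟨g t, ?_⟩
    rw [← Module.End.mul_apply, ← pow_succ]
  obtain ⟨n₀, hn₀⟩ : ∃ n, R (n + 1) = R n := by
    by_contra hcon
    push_neg at hcon
    have hstrict : ∀ n, ((R (n + 1) : Set T)).ncard < ((R n : Set T)).ncard := by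
      intro n
      apply Set.ncard_lt_ncard
      · exact HasSubset.Subset.ssubset_of_ne (hRmono n) (by
          intro hh
          exact hcon n (SetLike.coe_injective hh))
      · exact (R n : Set T).toFinite
    have hbound : ∀ n, ((R n : Set T)).ncard + n ≤ ((R 0 : Set T)).ncard := by
      intro n
      induction n with
      | zero => omega
      | succ k ih => have := hstrict k; omega
    have := hbound (((R 0 : Set T)).ncard + 1)
    omega
  set U := R n₀ with hUdef
  have hmapU : Submodule.map g U = U := by rw [hUdef, ← hRsucc, hn₀]
  -- iterated facts
  have hgk : ∀ (k : ℕ) (x : T), (g ^ k) (φ x) = φ ((g ^ k) x) := by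
    intro k
    induction k with
    | zero => intro x; simp
    | succ k ih =>
      intro x
      rw [pow_succ' g k, Module.End.mul_apply, Module.End.mul_apply, ih, hgapp, hgapp, hcomm]
  have hg1 : ∀ (k : ℕ) (x : T), p ^ (E - 1) • ((g ^ k) x) = p ^ (E - 1) • x := by
    intro k
    induction k with
    | zero => intro x; simp
    | succ k ih =>
      intro x
      rw [pow_succ g k, Module.End.mul_apply, ih, hgapp, hψ1]
  refine ⟨U, ?_, ?_, ?_, ?_⟩
  · -- φ-invariance
    rintro x ⟨t, rfl⟩
    exact ⟨φ t, hgk n₀ t⟩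
  · -- φ⁻¹ invariance
    rintro x ⟨t, rfl⟩
    refine ⟨(-φ : AddAut T) t, ?_⟩
    have : (g ^ n₀) (φ ((-φ : AddAut T) t)) = φ ((g ^ n₀) ((-φ : AddAut T) t)) := hgk n₀ _
    rw [AddAut.apply_neg_self] at this
    rw [this]
    simp
  · -- top part
    intro t
    exact ⟨(g ^ n₀) t, ⟨t, rfl⟩, hg1 n₀ t⟩
  · -- divisibility
    intro j hj1 hj2 u hu hju
    have hUg : ∀ x ∈ U, g x ∈ U := by
      intro x hx
      rw [← hmapU]
      exact Submodule.mem_map_of_mem hx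
    set gr : ↥U →ₗ[ℤ] ↥U := g.restrict hUg with hgrdef
    have hgrsurj : Function.Surjective gr := by
      intro u
      have : (u : T) ∈ Submodule.map g U := by rw [hmapU]; exact u.2
      obtain ⟨x, hx, hgx⟩ := this
      exact ⟨⟨x, hx⟩, Subtype.ext hgx⟩
    have hgrbij : Function.Bijective gr := by
      refine ⟨?_, hgrsurj⟩
      exact Finite.injective_iff_surjective.mpr hgrsurj
    have hpowbij : ∀ k : ℕ, Function.Bijective ((gr ^ k : Module.End ℤ ↥U)) := by
      intro k
      induction k with
      | zero => simpa [Module.End.one_eq_id] using Function.bijective_id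
      | succ k ih =>
        rw [pow_succ, Module.End.mul_eq_comp, LinearMap.coe_comp]
        exact Function.Bijective.comp ih hgrbij
    have hcoe : ∀ (k : ℕ) (x : ↥U), (((gr ^ k : Module.End ℤ ↥U)) x : T) = (g ^ k) (x : T) := by
      intro k
      induction k with
      | zero => intro x; simp
      | succ k ih =>
        intro x
        rw [pow_succ' g k, pow_succ' gr k, Module.End.mul_apply, Module.End.mul_apply, ← ih]
        rfl
    obtain ⟨ub, hub⟩ := (hpowbij (n₀ + 1)).2 ⟨u, hu⟩
    have hubker : p ^ j • ub = 0 := by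
      apply (hpowbij (n₀ + 1)).1
      rw [map_nsmul, hub, map_zero]
      exact Subtype.ext (by simpa using hju)
    have hubE : p ^ (E - 1) • (ub : T) = 0 := by
      have : p ^ (E - 1) = p ^ j * p ^ (E - 1 - j) := by
        rw [← pow_add]
        congr 1
        omega
      rw [this, mul_nsmul]
      have : p ^ j • (ub : T) = 0 := by
        have := congrArg (Subtype.val) hubker
        simpa using this
      rw [this, smul_zero]
    obtain ⟨y, hy⟩ := hψ2 (ub : T) hubE
    refine ⟨(g ^ n₀) y, ⟨y, rfl⟩, ?_⟩
    have hu1 : u = (g ^ (n₀ + 1)) (ub : T) := by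
      have := congrArg (Subtype.val) hub
      rw [hcoe] at this
      exact this.symm
    rw [hu1, pow_succ g n₀, Module.End.mul_apply, hgapp, hy, map_nsmul]


/-- lk bundled as hom in the second variable -/
def lkM {T : Type} [AddCommGroup T] (lk : T → T → AddCircle (1 : ℚ))
    (hadd : ∀ x y z : T, lk (x + y) z = lk x z + lk y z)
    (hsymm : ∀ x y : T, lk x y = lk y x) (x : T) : T →+ AddCircle (1 : ℚ) :=
  AddMonoidHom.mk' (fun y => lk x y)
    (fun y z => by show lk x (y + z) = lk x y + lk x z
                   rw [hsymm x (y + z), hadd, hsymm y x, hsymm z x])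

variable {T : Type} [AddCommGroup T]

lemma lkM_apply (lk : T → T → AddCircle (1 : ℚ)) (hadd : ∀ x y z : T, lk (x + y) z = lk x z + lk y z)
    (hsymm : ∀ x y : T, lk x y = lk y x) (x y : T) :
    lkM lk hadd hsymm x y = lk x y := rfl

lemma lk_nsmul_right (lk : T → T → AddCircle (1 : ℚ)) (hadd : ∀ x y z : T, lk (x + y) z = lk x z + lk y z)
    (hsymm : ∀ x y : T, lk x y = lk y x) (n : ℕ) (x y : T) :
    lk x (n • y) = n • lk x y := by
  rw [← lkM_apply lk hadd hsymm, map_nsmul]; rfl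

lemma lk_nsmul_left (lk : T → T → AddCircle (1 : ℚ))
    (hadd : ∀ x y z : T, lk (x + y) z = lk x z + lk y z)
    (hsymm : ∀ x y : T, lk x y = lk y x) (n : ℕ) (x y : T) :
    lk (n • x) y = n • lk x y := by
  rw [hsymm, lk_nsmul_right lk hadd hsymm, hsymm]

lemma lk_zero_right (lk : T → T → AddCircle (1 : ℚ)) (hadd : ∀ x y z : T, lk (x + y) z = lk x z + lk y z)
    (hsymm : ∀ x y : T, lk x y = lk y x) (x : T) :
    lk x 0 = 0 := map_zero (lkM lk hadd hsymm x)

lemma lk_zero_left (lk : T → T → AddCircle (1 : ℚ))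
    (hadd : ∀ x y z : T, lk (x + y) z = lk x z + lk y z)
    (hsymm : ∀ x y : T, lk x y = lk y x) (y : T) :
    lk 0 y = 0 := by rw [hsymm]; exact lk_zero_right lk hadd hsymm y

lemma lk_sub_right (lk : T → T → AddCircle (1 : ℚ)) (hadd : ∀ x y z : T, lk (x + y) z = lk x z + lk y z)
    (hsymm : ∀ x y : T, lk x y = lk y x) (x y z : T) :
    lk x (y - z) = lk x y - lk x z :=
  map_sub (lkM lk hadd hsymm x) y z

lemma U_nondeg (p E : ℕ) (hp : p.Prime) (hE : 1 ≤ E)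
    (T : Type) [AddCommGroup T]
    (lk : T → T → AddCircle (1 : ℚ))
    (hadd : ∀ x y z : T, lk (x + y) z = lk x z + lk y z)
    (hsymm : ∀ x y : T, lk x y = lk y x)
    (hnd : ∀ x : T, x ≠ 0 → ∃ y : T, lk x y ≠ 0)
    (hexp : ∀ x : T, p ^ E • x = 0)
    (U : Submodule ℤ T)
    (hU2 : ∀ t : T, ∃ u ∈ U, p ^ (E - 1) • u = p ^ (E - 1) • t)
    (hU3 : ∀ j : ℕ, 1 ≤ j → j ≤ E - 1 → ∀ u ∈ U, p ^ j • u = 0 → ∃ w ∈ U, u = p • w) :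
    ∀ u ∈ U, u ≠ 0 → ∃ u' ∈ U, lk u u' ≠ 0 := by
  classical
  intro u hu hune
  set P : ℕ → Prop := fun j => ∃ w, w ∈ U ∧ u = p ^ j • w with hPdef
  have hP0 : P 0 := ⟨u, hu, by rw [pow_zero, one_nsmul]⟩
  have hPbound : ∀ j, P j → j < E := by
    intro j ⟨w, hwU, hw⟩
    by_contra hc
    push_neg at hc
    have : p ^ j = p ^ (j - E) * p ^ E := by rw [← pow_add]; congr 1; omega
    rw [this, mul_nsmul, hexp] at hw
    exact hune hw
  set j := Nat.findGreatest P E with hjdef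
  have hPj : P j := Nat.findGreatest_spec (Nat.zero_le E) hP0
  have hjE : j < E := hPbound j hPj
  have hmax : ¬ P (j + 1) := Nat.findGreatest_is_greatest (Nat.lt_succ_self j) (by omega)
  obtain ⟨w, hwU, hw⟩ := hPj
  have hpw : p ^ (E - 1) • w ≠ 0 := by
    intro h0
    by_cases hE1 : E - 1 = 0
    · rw [hE1, pow_zero, one_nsmul] at h0
      rw [h0, smul_zero] at hw
      exact hune hw
    · obtain ⟨w', hw'U, hw'⟩ := hU3 (E - 1) (by omega) le_rfl w hwU h0
      refine hmax ⟨w', hw'U, ?_⟩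
      rw [hw, hw', ← mul_nsmul, ← pow_succ']
  obtain ⟨y, hy⟩ := hnd _ hpw
  obtain ⟨u'', hu''U, hu''⟩ := hU2 y
  refine ⟨u'', hu''U, ?_⟩
  have key1 : p ^ (E - 1) • lk w u'' = lk (p ^ (E - 1) • w) y :=
    calc p ^ (E - 1) • lk w u''
        = lk w (p ^ (E - 1) • u'') := (lk_nsmul_right lk hadd hsymm _ _ _).symm
      _ = lk w (p ^ (E - 1) • y) := by rw [hu'']
      _ = p ^ (E - 1) • lk w y := lk_nsmul_right lk hadd hsymm _ _ _
      _ = lk (p ^ (E - 1) • w) y := (lk_nsmul_left lk hadd hsymm _ _ _).symm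
  intro hcon
  rw [hw, lk_nsmul_left lk hadd hsymm] at hcon
  have : p ^ (E - 1) • lk w u'' = 0 := by
    have hsplit : p ^ (E - 1) = p ^ j * p ^ (E - 1 - j) := by
      rw [← pow_add]; congr 1; omega
    rw [hsplit, mul_nsmul, hcon, smul_zero]
  rw [key1] at this
  exact hy this

lemma perp_compl (p E n : ℕ) (hp : p.Prime) (hE : 1 ≤ E)
    (T : Type) [AddCommGroup T] [Finite T]
    (lk : T → T → AddCircle (1 : ℚ))
    (hadd : ∀ x y z : T, lk (x + y) z = lk x z + lk y z)
    (hsymm : ∀ x y : T, lk x y = lk y x)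
    (hexp : ∀ x : T, p ^ E • x = 0)
    (U : Submodule ℤ T) (ρ : ↥U ≃+ (Fin n → ZMod (p ^ E)))
    (hUnd : ∀ u ∈ U, u ≠ 0 → ∃ u' ∈ U, lk u u' ≠ 0) :
    ∀ t : T, ∃ u ∈ U, ∀ v ∈ U, lk (t - u) v = 0 := by
  classical
  set Q := p ^ E with hQdef
  have hQ0 : Q ≠ 0 := pow_ne_zero _ hp.pos.ne'
  haveI : NeZero Q := ⟨hQ0⟩
  set ub : Fin n → ↥U := fun i => ρ.symm (Pi.single i 1) with hubdef
  have htor : ∀ (t : T) (i : Fin n), Q • lk t (ub i : T) = 0 := by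
    intro t i
    rw [← lk_nsmul_right lk hadd hsymm]
    have : Q • (ub i : T) = 0 := by
      have := hexp (ub i : T)
      rwa [hQdef]
    rw [this, lk_zero_right lk hadd hsymm]
  have hDex : ∀ (t : T) (i : Fin n), ∃ k : ZMod Q, zeta Q k = lk t (ub i : T) := by
    intro t i
    exact zeta_surj_torsion Q hQ0 _ (htor t i)
  choose D hD using hDex
  have hDadd : ∀ s t : T, D (s + t) = D s + D t := by
    intro s t
    funext i
    apply zeta_injective Q hQ0
    rw [Pi.add_apply, map_add, hD, hD, hD]
    exact hadd s t _
  have hDzero : ∀ i, D 0 i = 0 := by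
    intro i
    apply zeta_injective Q hQ0
    rw [hD, map_zero, lk_zero_left lk hadd hsymm]
  have hDzero' : ∀ x : T, (∀ i, D x i = 0) ↔ (∀ i, lk x (ub i : T) = 0) := by
    intro x
    constructor
    · intro h i
      rw [← hD, h i, map_zero]
    · intro h i
      apply zeta_injective Q hQ0
      rw [hD, map_zero, h i]
  -- generation
  have hgen : ∀ (x : T), (∀ i, lk x (ub i : T) = 0) → ∀ v ∈ U, lk x v = 0 := by
    intro x hx v hv
    have hvrep : (⟨v, hv⟩ : ↥U) = ∑ i : Fin n, ((ρ ⟨v, hv⟩) i).val • ub i := by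
      apply ρ.injective
      rw [map_sum]
      funext k
      rw [Finset.sum_apply]
      have : ∀ i : Fin n, (ρ (((ρ ⟨v, hv⟩) i).val • ub i)) k
          = if i = k then (ρ ⟨v, hv⟩) k else 0 := by
        intro i
        rw [map_nsmul, hubdef]
        simp only [AddEquiv.apply_symm_apply]
        rw [Pi.smul_apply]
        by_cases h : i = k
        · subst h
          rw [Pi.single_eq_same, if_pos rfl, nsmul_eq_mul, mul_one, ZMod.natCast_zmod_val]
        · rw [Pi.single_eq_of_ne (fun hc => h hc.symm), if_neg h, smul_zero]
      rw [Finset.sum_congr rfl fun i _ => this i, Finset.sum_ite_eq' Finset.univ k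
        (fun _ => (ρ ⟨v, hv⟩) k)]
      simp
    have hvcoe : v = ∑ i : Fin n, ((ρ ⟨v, hv⟩) i).val • (ub i : T) := by
      have := congrArg (Subtype.val) hvrep
      simpa using this
    rw [hvcoe, ← lkM_apply lk hadd hsymm, map_sum]
    apply Finset.sum_eq_zero
    intro i _
    rw [map_nsmul, lkM_apply, hx i, smul_zero]
  set DM : T →+ (Fin n → ZMod Q) := AddMonoidHom.mk' D hDadd with hDMdef
  have hDMapp : ∀ x : T, DM x = D x := fun _ => rfl
  have hDinj : Function.Injective (fun v : ↥U => DM (v : T)) := by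
    intro v w hvw
    have hvw' : DM (v : T) = DM (w : T) := hvw
    have h0 : DM ((v : T) - (w : T)) = 0 := by
      rw [map_sub, hvw', sub_self]
    have hzero : ∀ i, lk ((v : T) - (w : T)) (ub i : T) = 0 := by
      intro i
      rw [← hD]
      have : D ((v : T) - (w : T)) i = 0 := by
        rw [← hDMapp, h0]; rfl
      rw [this, map_zero]
    have hall := hgen _ hzero
    have hvw0 : (v : T) - (w : T) = 0 := by
      by_contra hne
      obtain ⟨u', hu', hlk⟩ := hUnd _ (sub_mem v.2 w.2) hne
      exact hlk (hall u' hu')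
    exact Subtype.ext (sub_eq_zero.mp hvw0)
  have hcard : Nat.card ↥U = Nat.card (Fin n → ZMod Q) := Nat.card_congr ρ.toEquiv
  have hbij : Function.Bijective (fun v : ↥U => DM (v : T)) :=
    (Nat.bijective_iff_injective_and_card _).mpr ⟨hDinj, hcard⟩
  intro t
  obtain ⟨v, hv⟩ := hbij.2 (DM t)
  have hv' : DM (v : T) = DM t := hv
  have h0 : DM (t - (v : T)) = 0 := by rw [map_sub, hv', sub_self]
  refine ⟨(v : T), v.2, ?_⟩
  intro w hw
  refine hgen (t - (v : T)) ?_ w hw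
  intro i
  rw [← hD]
  have : D (t - (v : T)) i = 0 := by rw [← hDMapp, h0]; rfl
  rw [this, map_zero]

lemma step (p m E : ℕ) (hp : p.Prime) (hm : 0 < m) (hpm : ¬ p ∣ m) (hE : 1 ≤ E)
    (T : Type) [AddCommGroup T] [Finite T]
    (lk : T → T → AddCircle (1 : ℚ))
    (hadd : ∀ x y z : T, lk (x + y) z = lk x z + lk y z)
    (hsymm : ∀ x y : T, lk x y = lk y x)
    (hnd : ∀ x : T, x ≠ 0 → ∃ y : T, lk x y ≠ 0)
    (φ : AddAut T) (hφm : m • φ = 0)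
    (hφiso : ∀ x y : T, lk (φ x) (φ y) = lk x y)
    (hexp : ∀ x : T, p ^ E • x = 0) :
    ∃ (U V : Submodule ℤ T) (nn : ℕ),
      Nonempty (↥U ≃+ (Fin nn → ZMod (p ^ E))) ∧
      (∀ x ∈ U, φ x ∈ U) ∧
      (∀ x ∈ V, φ x ∈ V) ∧ (∀ x ∈ V, (-φ : AddAut T) x ∈ V) ∧
      (∀ u ∈ U, ∀ v ∈ V, lk u v = 0) ∧
      U ⊓ V = ⊥ ∧ U ⊔ V = ⊤ ∧
      (∀ x ∈ V, p ^ (E - 1) • x = 0) ∧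
      (∀ x, x ∈ V → x ≠ 0 → ∃ y ∈ V, lk x y ≠ 0) := by
  classical
  obtain ⟨U, hUinv, hUinv', hU2, hU3⟩ := avg_U p m E hp hm hpm hE T φ hφm hexp
  have hUnd := U_nondeg p E hp hE T lk hadd hsymm hnd hexp U hU2 hU3
  -- homocyclic structure of U
  have hexpU : ∀ x : ↥U, p ^ E • x = 0 := by
    intro x
    apply Subtype.ext
    have : ((p ^ E • x : ↥U) : T) = p ^ E • (x : T) := rfl
    rw [this, hexp]
    rfl
  have hdivU : ∀ j : ℕ, 1 ≤ j → j < E → ∀ x : ↥U, p ^ j • x = 0 → ∃ y : ↥U, x = p • y := by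
    intro j hj1 hj2 x hx
    have hx' : p ^ j • (x : T) = 0 := by
      have := congrArg Subtype.val hx
      exact this
    obtain ⟨w, hwU, hw⟩ := hU3 j hj1 (by omega) (x : T) x.2 hx'
    exact ⟨⟨w, hwU⟩, Subtype.ext hw⟩
  obtain ⟨nn, ⟨ρ⟩⟩ := homocyclic_iso p E hp ↥U hexpU hdivU
  -- the orthogonal complement
  set V : Submodule ℤ T :=
    { carrier := {x | ∀ u ∈ U, lk x u = 0}
      zero_mem' := fun u _ => lk_zero_left lk hadd hsymm u
      add_mem' := by
        intro a b ha hb u hu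
        rw [hadd]
        rw [ha u hu, hb u hu, add_zero]
      smul_mem' := by
        intro z a ha u hu
        show lk (z • a) u = 0
        rw [hsymm, ← lkM_apply lk hadd hsymm, map_zsmul, lkM_apply, hsymm, ha u hu, smul_zero] }
    with hVdef
  have hVmem : ∀ x : T, x ∈ V ↔ ∀ u ∈ U, lk x u = 0 := fun x => Iff.rfl
  have hUV : ∀ u ∈ U, ∀ v ∈ V, lk u v = 0 := by
    intro u hu v hv
    rw [hsymm]
    exact hv u hu
  have hVinv : ∀ x ∈ V, φ x ∈ V := by
    intro x hx u hu
    have : lk (φ x) u = lk (φ x) (φ ((-φ : AddAut T) u)) := by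
      rw [AddAut.apply_neg_self]
    rw [this, hφiso]
    exact hx _ (hUinv' u hu)
  have hVinv' : ∀ x ∈ V, (-φ : AddAut T) x ∈ V := by
    intro x hx u hu
    have : lk ((-φ : AddAut T) x) u = lk (φ ((-φ : AddAut T) x)) (φ u) := (hφiso _ _).symm
    rw [AddAut.apply_neg_self] at this
    rw [this]
    exact hx _ (hUinv u hu)
  have hbot : U ⊓ V = ⊥ := by
    rw [eq_bot_iff]
    rintro x ⟨hxU, hxV⟩
    by_contra hne
    have hne' : x ≠ 0 := fun hc => hne (by rw [hc]; exact Submodule.zero_mem ⊥)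
    obtain ⟨u', hu', hlk⟩ := hUnd x hxU hne'
    exact hlk (hxV u' hu')
  have htop : U ⊔ V = ⊤ := by
    rw [eq_top_iff]
    intro t _
    obtain ⟨u, hu, hperp⟩ := perp_compl p E nn hp hE T lk hadd hsymm hexp U ρ hUnd t
    rw [Submodule.mem_sup]
    exact ⟨u, hu, t - u, fun w hw => hperp w hw, by abel⟩
  have hVexp : ∀ x ∈ V, p ^ (E - 1) • x = 0 := by
    intro x hx
    by_contra hne
    obtain ⟨y, hy⟩ := hnd _ hne
    obtain ⟨u, hu, hu2⟩ := hU2 y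
    apply hy
    calc lk (p ^ (E - 1) • x) y = p ^ (E - 1) • lk x y := lk_nsmul_left lk hadd hsymm _ _ _
      _ = lk x (p ^ (E - 1) • y) := (lk_nsmul_right lk hadd hsymm _ _ _).symm
      _ = lk x (p ^ (E - 1) • u) := by rw [← hu2]
      _ = p ^ (E - 1) • lk x u := lk_nsmul_right lk hadd hsymm _ _ _
      _ = 0 := by rw [hx u hu, smul_zero]
  have hVnd : ∀ x, x ∈ V → x ≠ 0 → ∃ y ∈ V, lk x y ≠ 0 := by
    intro x hxV hne
    obtain ⟨y, hy⟩ := hnd x hne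
    have : y ∈ (⊤ : Submodule ℤ T) := Submodule.mem_top
    rw [← htop, Submodule.mem_sup] at this
    obtain ⟨u, hu, v, hv, rfl⟩ := this
    refine ⟨v, hv, ?_⟩
    intro hc
    apply hy
    have : lk x (u + v) = lk x u + lk x v := by
      rw [hsymm, hadd, hsymm u x, hsymm v x]
    rw [this, hc, add_zero]
    exact hxV u hu
  exact ⟨U, V, nn, ⟨ρ⟩, hUinv, hVinv, hVinv', hUV, hbot, htop, hVexp, hVnd⟩

lemma key (p m : ℕ) (hp : p.Prime) (hm : 0 < m) (hpm : ¬ p ∣ m) :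
    ∀ (E : ℕ) (T : Type) (_inst1 : AddCommGroup T) (_inst2 : Finite T)
      (lk : T → T → AddCircle (1 : ℚ))
      (_hadd : ∀ x y z : T, lk (x + y) z = lk x z + lk y z)
      (_hsymm : ∀ x y : T, lk x y = lk y x)
      (_hnd : ∀ x : T, x ≠ 0 → ∃ y : T, lk x y ≠ 0)
      (φ : AddAut T) (_hφm : m • φ = 0)
      (_hφiso : ∀ x y : T, lk (φ x) (φ y) = lk x y)
      (_hexp : ∀ x : T, p ^ E • x = 0),
      ∃ Tsub : Fin E → Submodule ℤ T,
        DirectSum.IsInternal Tsub ∧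
        (∀ i : Fin E, ∀ x ∈ Tsub i, φ x ∈ Tsub i) ∧
        (∀ i j : Fin E, i ≠ j → ∀ x ∈ Tsub i, ∀ y ∈ Tsub j, lk x y = 0) ∧
        (∀ i : Fin E, ∃ ni : ℕ,
          Nonempty ((Tsub i) ≃+ (Fin ni → ZMod (p ^ (i.1 + 1))))) := by
  intro E
  induction E with
  | zero =>
    intro T inst1 inst2 lk hadd hsymm hnd φ hφm hφiso hexp
    have hzero : ∀ x : T, x = 0 := by
      intro x
      have := hexp x
      rwa [pow_zero, one_nsmul] at this
    refine ⟨fun i => i.elim0, ⟨?_, ?_⟩, fun i => i.elim0, fun i => i.elim0, fun i => i.elim0⟩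
    · intro a b _
      refine DFinsupp.ext fun i => i.elim0
    · intro x
      exact ⟨0, by rw [map_zero]; exact (hzero x).symm⟩
  | succ e ih =>
    intro T inst1 inst2 lk hadd hsymm hnd φ hφm hφiso hexp
    classical
    obtain ⟨U, V, nn, ⟨ρ⟩, hUinv, hVinv, hVinv', hUV, hbot, htop, hVexp, hVnd⟩ :=
      step p m (e + 1) hp hm hpm (by omega) T lk hadd hsymm hnd φ hφm hφiso hexp
    -- restrict data to V
    set lk' : ↥V → ↥V → AddCircle (1 : ℚ) := fun x y => lk (x : T) (y : T) with hlk'def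
    have hadd' : ∀ x y z : ↥V, lk' (x + y) z = lk' x z + lk' y z := fun x y z => hadd _ _ _
    have hsymm' : ∀ x y : ↥V, lk' x y = lk' y x := fun x y => hsymm _ _
    have hnd' : ∀ x : ↥V, x ≠ 0 → ∃ y : ↥V, lk' x y ≠ 0 := by
      intro x hx
      have hxne : (x : T) ≠ 0 := fun hc => hx (Subtype.ext hc)
      obtain ⟨y, hy, hlk⟩ := hVnd (x : T) x.2 hxne
      exact ⟨⟨y, hy⟩, hlk⟩
    set φ' : AddAut ↥V :=
      { toFun := fun x => ⟨φ (x : T), hVinv _ x.2⟩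
        invFun := fun x => ⟨(-φ : AddAut T) (x : T), hVinv' _ x.2⟩
        left_inv := fun x => Subtype.ext (by simp)
        right_inv := fun x => Subtype.ext (by simp)
        map_add' := fun x y => Subtype.ext (by simp) } with hφ'def
    have hφ'coe : ∀ (k : ℕ) (x : ↥V), ((k • φ') x : T) = (k • φ) (x : T) := by
      intro k
      induction k with
      | zero => intro x; simp
      | succ k ihk =>
        intro x
        rw [succ_nsmul, succ_nsmul]
        have h1 : ((k • φ' + φ') x : T) = ((k • φ') (φ' x) : T) := rfl
        rw [h1, ihk (φ' x)]
        rfl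
    have hφ'm : m • φ' = 0 := by
      apply DFunLike.ext
      intro x
      apply Subtype.ext
      rw [hφ'coe m x, hφm]
      rfl
    have hφ'iso : ∀ x y : ↥V, lk' (φ' x) (φ' y) = lk' x y := fun x y => hφiso _ _
    have hexp' : ∀ x : ↥V, p ^ e • x = 0 := by
      intro x
      apply Subtype.ext
      have h1 : ((p ^ e • x : ↥V) : T) = p ^ e • (x : T) := rfl
      rw [h1]
      have := hVexp (x : T) x.2
      simpa using this
    obtain ⟨W, hWint, hWinv, hWorth, hWiso⟩ :=
      ih ↥V inferInstance inferInstance lk' hadd' hsymm' hnd' φ' hφ'm hφ'iso hexp'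
    -- assemble
    set Tsub : Fin (e + 1) → Submodule ℤ T :=
      Fin.snoc (fun i => (W i).map V.subtype) U with hTsubdef
    have hTlast : Tsub (Fin.last e) = U := by
      rw [hTsubdef]; simp
    have hTcast : ∀ k : Fin e, Tsub k.castSucc = (W k).map V.subtype := by
      intro k
      rw [hTsubdef]; simp
    have hmapleV : ∀ k : Fin e, (W k).map V.subtype ≤ V := by
      rintro k x ⟨w, _, rfl⟩
      exact w.2
    have hWsup : ⨆ i, (W i).map V.subtype = V := by
      rw [← Submodule.map_iSup, hWint.submodule_iSup_eq_top, Submodule.map_top,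
        Submodule.range_subtype]
    have hsup : (⨆ i, Tsub i) = ⊤ := by
      rw [eq_top_iff, ← htop]
      apply sup_le
      · rw [← hTlast]; exact le_iSup Tsub (Fin.last e)
      · rw [← hWsup]
        apply iSup_le
        intro k
        rw [← hTcast k]
        exact le_iSup Tsub k.castSucc
    have hindep : iSupIndep Tsub := by
      rw [iSupIndep_def]
      intro i
      refine Fin.lastCases ?_ ?_ i
      · -- i = last
        have hle : (⨆ j, ⨆ (_ : j ≠ Fin.last e), Tsub j) ≤ V := by
          apply iSup_le; intro j; apply iSup_le; intro hj
          obtain ⟨k, rfl⟩ := Fin.eq_castSucc_of_ne_last hj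
          rw [hTcast k]
          exact hmapleV k
        rw [hTlast]
        exact Disjoint.mono_right hle (disjoint_iff.mpr hbot)
      · -- i = castSucc k₀
        intro k₀
        set M : Submodule ℤ T := ⨆ j, ⨆ (_ : j ≠ k₀), (W j).map V.subtype with hMdef
        have hMleV : M ≤ V := by
          apply iSup_le; intro j; apply iSup_le; intro hj; exact hmapleV j
        have hle : (⨆ j, ⨆ (_ : j ≠ k₀.castSucc), Tsub j) ≤ U ⊔ M := by
          apply iSup_le; intro j; apply iSup_le; intro hj
          by_cases hjl : j = Fin.last e
          · subst hjl; rw [hTlast]; exact le_sup_left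
          · obtain ⟨k, rfl⟩ := Fin.eq_castSucc_of_ne_last hjl
            have hkne : k ≠ k₀ := fun hc => hj (by rw [hc])
            rw [hTcast k]
            refine le_trans ?_ le_sup_right
            rw [hMdef]
            exact le_iSup_of_le k (le_iSup_of_le hkne le_rfl)
        refine Disjoint.mono_right hle ?_
        rw [hTcast k₀, disjoint_iff]
        have hWk₀ : (W k₀).map V.subtype ≤ V := hmapleV k₀
        have hUM : (U ⊔ M) ⊓ V = M := by
          rw [sup_comm]
          rw [sup_inf_assoc_of_le U hMleV]
          rw [hbot, sup_bot_eq]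
        have hMeq : M = (⨆ j, ⨆ (_ : j ≠ k₀), W j).map V.subtype := by
          rw [hMdef, Submodule.map_iSup]
          congr 1
          funext j
          rw [Submodule.map_iSup]
        have hWindep : (W k₀) ⊓ (⨆ j, ⨆ (_ : j ≠ k₀), W j) = ⊥ := by
          have := hWint.submodule_iSupIndep
          rw [iSupIndep_def] at this
          exact disjoint_iff.mp (this k₀)
        rw [eq_bot_iff]
        intro x hx
        have hxV : x ∈ V := hWk₀ hx.1
        have hxM : x ∈ M := by
          rw [← hUM]; exact ⟨hx.2, hxV⟩
        have : x ∈ ((W k₀).map V.subtype) ⊓ ((⨆ j, ⨆ (_ : j ≠ k₀), W j).map V.subtype) :=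
          ⟨hx.1, by rw [← hMeq]; exact hxM⟩
        rw [← Submodule.map_inf _ (Submodule.injective_subtype V), hWindep,
          Submodule.map_bot] at this
        exact this
    refine ⟨Tsub, DirectSum.isInternal_submodule_of_iSupIndep_of_iSup_eq_top hindep hsup,
      ?_, ?_, ?_⟩
    · -- invariance
      intro i
      refine Fin.lastCases ?_ ?_ i
      · rw [hTlast]; exact hUinv
      · intro k
        rw [hTcast k]
        rintro x ⟨w, hw, rfl⟩
        exact ⟨φ' w, hWinv k w hw, rfl⟩
    · -- orthogonality
      intro i j hij x hxi y hyj
      by_cases hi : i = Fin.last e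
      · subst hi
        obtain ⟨l, rfl⟩ := Fin.eq_castSucc_of_ne_last (Ne.symm hij)
        rw [hTlast] at hxi
        rw [hTcast] at hyj
        exact hUV x hxi y (hmapleV l hyj)
      · obtain ⟨k, rfl⟩ := Fin.eq_castSucc_of_ne_last hi
        by_cases hj : j = Fin.last e
        · subst hj
          rw [hTlast] at hyj
          rw [hTcast] at hxi
          rw [hsymm]
          exact hUV y hyj x (hmapleV k hxi)
        · obtain ⟨l, rfl⟩ := Fin.eq_castSucc_of_ne_last hj
          rw [hTcast] at hxi hyj
          obtain ⟨w, hw, rfl⟩ := hxi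
          obtain ⟨w', hw', rfl⟩ := hyj
          have hkl : k ≠ l := fun hc => hij (by rw [hc])
          exact hWorth k l hkl w hw w' hw'
    · -- isomorphisms
      intro i
      refine Fin.lastCases ?_ ?_ i
      · rw [hTlast]
        refine ⟨nn, ⟨?_⟩⟩
        have : (Fin.last e).1 + 1 = e + 1 := rfl
        rw [this]
        exact ρ
      · intro k
        obtain ⟨nk, ⟨σ⟩⟩ := hWiso k
        refine ⟨nk, ⟨?_⟩⟩
        have hcs : (k.castSucc).1 + 1 = k.1 + 1 := rfl
        rw [hTcast k, hcs]
        exact ((Submodule.equivMapOfInjective V.subtype (Submodule.injective_subtype V)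
          (W k)).symm.toAddEquiv.trans σ)

theorem stmt3 (p : ℕ) (hp : p.Prime) (hp2 : p ≠ 2)
    (m : ℕ) (hm : 0 < m) (hpm : ¬ p ∣ m)
    (T : Type) [AddCommGroup T] [Finite T]
    (hcard : ∃ j : ℕ, Nat.card T = p ^ j)
    (lk : T → T → AddCircle (1 : ℚ))
    (hadd : ∀ x y z : T, lk (x + y) z = lk x z + lk y z)
    (hsymm : ∀ x y : T, lk x y = lk y x)
    (hnd : ∀ x : T, x ≠ 0 → ∃ y : T, lk x y ≠ 0)
    (φ : AddAut T) (hφm : m • φ = 0)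
    (hφiso : ∀ x y : T, lk (φ x) (φ y) = lk x y) :
    ∃ (N : ℕ) (Tsub : Fin N → Submodule ℤ T),
      DirectSum.IsInternal Tsub ∧
      (∀ i : Fin N, ∀ x ∈ Tsub i, φ x ∈ Tsub i) ∧
      (∀ i j : Fin N, i ≠ j → ∀ x ∈ Tsub i, ∀ y ∈ Tsub j, lk x y = 0) ∧
      (∀ i : Fin N, ∃ ni : ℕ,
        Nonempty ((Tsub i) ≃+ (Fin ni → ZMod (p ^ (i.1 + 1))))) := by
  obtain ⟨j, hj⟩ := hcard
  have hexp : ∀ x : T, p ^ j • x = 0 := by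
    intro x
    have := card_nsmul_eq_zero' (G := T) (x := x)
    rwa [hj] at this
  obtain ⟨Tsub, h1, h2, h3, h4⟩ :=
    key p m hp hm hpm j T inferInstance inferInstance lk hadd hsymm hnd φ hφm hφiso hexp
  exact ⟨j, Tsub, h1, h2, h3, h4⟩
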